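/- For every integer n ≥ 0, the sum over k from 0 to n of 2(-q^{n+1})^k/(1+q^k) · H_k(q)/H_n(q) equals the sum over k from -n to n of (-q)^{k^2}, as an identity of rational functions in q. -/

import Mathlib

open Finset

/-- The formal variable q as a rational function. -/
noncomputable def q : RatFunc ℚ := RatFunc.X

/-- H n q = prod_{j=1}^n (1+q^j)/(1-q^j). -/
noncomputable def H (n : ℕ) : RatFunc ℚ := ∏ j ∈ Finset.Icc 1 n, (1 + q ^ j) / (1 - q ^ j)

lemma one_sub_q_pow_ne {j : ℕ} (hj : 0 < j) : (1 - q ^ j : RatFunc ℚ) ≠ 0 := by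
  have h1 : (algebraMap (Polynomial ℚ) (RatFunc ℚ)) (1 - Polynomial.X ^ j) = 1 - q ^ j := by
    simp [q, RatFunc.algebraMap_X]
  rw [← h1, map_ne_zero_iff _ (RatFunc.algebraMap_injective ℚ)]
  intro h
  have := congrArg (fun p => Polynomial.coeff p j) h
  simp [Polynomial.coeff_one, hj.ne'] at this

lemma two_ne : (2 : RatFunc ℚ) ≠ 0 := by
  have h1 : (algebraMap (Polynomial ℚ) (RatFunc ℚ)) 2 = 2 := map_ofNat _ 2
  rw [← h1, map_ne_zero_iff _ (RatFunc.algebraMap_injective ℚ)]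
  norm_num

lemma one_add_q_pow_ne (j : ℕ) : (1 + q ^ j : RatFunc ℚ) ≠ 0 := by
  rcases Nat.eq_zero_or_pos j with rfl | hj
  · rw [pow_zero, one_add_one_eq_two]
    exact two_ne
  have h1 : (algebraMap (Polynomial ℚ) (RatFunc ℚ)) (1 + Polynomial.X ^ j) = 1 + q ^ j := by
    simp [q, RatFunc.algebraMap_X]
  rw [← h1, map_ne_zero_iff _ (RatFunc.algebraMap_injective ℚ)]
  intro h
  have := congrArg (fun p => Polynomial.coeff p j) h
  simp [Polynomial.coeff_one, hj.ne'] at this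

lemma H_ne (n : ℕ) : H n ≠ 0 := by
  unfold H
  rw [Finset.prod_ne_zero_iff]
  intro j hj
  simp only [Finset.mem_Icc] at hj
  exact div_ne_zero (one_add_q_pow_ne j) (one_sub_q_pow_ne hj.1)

lemma H_succ (n : ℕ) : H (n + 1) = H n * ((1 + q ^ (n+1)) / (1 - q ^ (n+1))) := by
  unfold H
  rw [Finset.prod_Icc_succ_top (by omega : 1 ≤ n + 1)]

lemma abstract_step {F : Type*} [Field F] (x xq Q hk hn A : F)
    (h1 : 1 + x ≠ 0) (h2 : 1 + xq ≠ 0) (h3 : 1 - xq ≠ 0) (h4 : 1 + Q ≠ 0)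
    (h5 : 1 - Q ≠ 0) (h6 : hn ≠ 0) :
    2 * (A * x) / (1 + x) * (hk / (hn * ((1 + Q) / (1 - Q))))
      = 2 * A / (1 + x) * (hk / hn)
        + ((1 - xq) / (1 + Q) * (2 * (A * -Q) / (1 + xq) * (hk * ((1 + xq) / (1 - xq)) / hn))
          - (1 - x) / (1 + Q) * (2 * A / (1 + x) * (hk / hn))) := by
  set E : F := (1 + x) * ((1 + Q) * hn) with hE
  have hEne : E ≠ 0 := by apply_rules [mul_ne_zero]
  have T1 : 2 * (A * x) / (1 + x) * (hk / (hn * ((1 + Q) / (1 - Q))))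
      = 2 * A * x * hk * (1 - Q) / E := by
    rw [hE]
    simp only [div_mul_div_comm, ← mul_div_assoc, div_div, div_mul_eq_mul_div, div_div_eq_mul_div]
    rw [div_eq_div_iff (by apply_rules [mul_ne_zero]) (by apply_rules [mul_ne_zero])]
    ring
  have T2 : 2 * A / (1 + x) * (hk / hn) = 2 * A * hk * (1 + Q) / E := by
    rw [hE]
    simp only [div_mul_div_comm, ← mul_div_assoc, div_div, div_mul_eq_mul_div, div_div_eq_mul_div]
    rw [div_eq_div_iff (by apply_rules [mul_ne_zero]) (by apply_rules [mul_ne_zero])]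
    ring
  have T3 : (1 - xq) / (1 + Q) * (2 * (A * -Q) / (1 + xq) * (hk * ((1 + xq) / (1 - xq)) / hn))
      = -(2 * A * Q * hk) * (1 + x) / E := by
    rw [hE]
    simp only [div_mul_div_comm, ← mul_div_assoc, div_div, div_mul_eq_mul_div, div_div_eq_mul_div]
    rw [div_eq_div_iff (by apply_rules [mul_ne_zero]) (by apply_rules [mul_ne_zero])]
    ring
  have T4 : (1 - x) / (1 + Q) * (2 * A / (1 + x) * (hk / hn))
      = (1 - x) * (2 * A * hk) / E := by
    rw [hE]
    simp only [div_mul_div_comm, ← mul_div_assoc, div_div, div_mul_eq_mul_div, div_div_eq_mul_div]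
    rw [div_eq_div_iff (by apply_rules [mul_ne_zero]) (by apply_rules [mul_ne_zero])]
    ring
  rw [T1, T3, T4, T2, ← sub_div, ← add_div]
  exact congrArg (fun z => z / E) (by ring)

lemma step (n k : ℕ) :
    2 * (-q ^ (n + 1 + 1)) ^ k / (1 + q ^ k) * (H k / H (n + 1))
      = 2 * (-q ^ (n + 1)) ^ k / (1 + q ^ k) * (H k / H n)
        + ((1 - q ^ (k+1)) / (1 + q ^ (n+1)) *
            (2 * (-q ^ (n + 1)) ^ (k+1) / (1 + q ^ (k+1)) * (H (k+1) / H n))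
          - (1 - q ^ k) / (1 + q ^ (n+1)) *
            (2 * (-q ^ (n + 1)) ^ k / (1 + q ^ k) * (H k / H n))) := by
  have e1 : (-q ^ (n + 1 + 1) : RatFunc ℚ) ^ k = (-q ^ (n+1)) ^ k * q ^ k := by
    rw [← mul_pow]; congr 1; rw [pow_succ]; ring
  have e2 : (-q ^ (n + 1) : RatFunc ℚ) ^ (k+1) = (-q ^ (n+1)) ^ k * -q ^ (n+1) := pow_succ _ _
  rw [e1, e2, H_succ n, H_succ k]
  exact abstract_step (q ^ k) (q ^ (k+1)) (q ^ (n+1)) (H k) (H n) ((-q ^ (n+1)) ^ k)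
    (one_add_q_pow_ne k) (one_add_q_pow_ne (k+1)) (one_sub_q_pow_ne (Nat.succ_pos k))
    (one_add_q_pow_ne (n+1)) (one_sub_q_pow_ne (Nat.succ_pos n)) (H_ne n)

lemma tail (n : ℕ) :
    (1 - q ^ (n+1)) / (1 + q ^ (n+1)) *
        (2 * (-q ^ (n + 1)) ^ (n+1) / (1 + q ^ (n+1)) * (H (n+1) / H n))
      + 2 * (-q ^ (n + 1 + 1)) ^ (n+1) / (1 + q ^ (n+1)) * (H (n+1) / H (n+1))
      = 2 * (-q) ^ ((n+1)^2) := by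
  rw [div_self (H_ne (n+1))]
  have hH : H (n+1) / H n = (1 + q^(n+1)) / (1 - q^(n+1)) := by
    rw [H_succ n, mul_div_cancel_left₀ _ (H_ne n)]
  rw [hH]
  have hpar : ((-1 : RatFunc ℚ)) ^ ((n+1)^2) = (-1) ^ (n+1) := by
    rcases Nat.even_or_odd (n+1) with h | h
    · rw [h.neg_one_pow, (Nat.even_pow.mpr ⟨h, two_ne_zero⟩).neg_one_pow]
    · rw [h.neg_one_pow, (h.pow).neg_one_pow]
  have e1 : (-q ^ (n+1) : RatFunc ℚ) ^ (n+1) = (-1) ^ (n+1) * (q ^ (n+1)) ^ (n+1) :=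
    neg_pow _ _
  have e2 : (-q ^ (n+1+1) : RatFunc ℚ) ^ (n+1)
      = (-1) ^ (n+1) * ((q ^ (n+1)) ^ (n+1) * q ^ (n+1)) := by
    rw [neg_pow, ← pow_mul, ← pow_mul, ← pow_add]
    congr 2
    ring
  have e3 : ((-q) ^ ((n+1)^2) : RatFunc ℚ) = (-1) ^ (n+1) * (q ^ (n+1)) ^ (n+1) := by
    rw [neg_pow, hpar, sq, pow_mul]
  rw [e1, e2, e3]
  set E : RatFunc ℚ := (-1) ^ (n+1)
  set Y : RatFunc ℚ := (q ^ (n+1)) ^ (n+1)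
  have h4 := one_add_q_pow_ne (n+1)
  have h5 := one_sub_q_pow_ne (Nat.succ_pos n)
  field_simp

theorem four_square_lemma_b (n : ℕ) :
    ∑ k ∈ Finset.range (n + 1), 2 * (-q ^ (n + 1)) ^ k / (1 + q ^ k) * (H k / H n)
      = ∑ k ∈ Finset.Icc (-(n : ℤ)) (n : ℤ), (-q) ^ (k ^ 2) := by
  induction n with
  | zero =>
    have hH0 : H 0 = 1 := by simp [H]
    simp [hH0]
    rw [one_add_one_eq_two]
    exact div_self two_ne
  | succ n ih =>
    set g : ℕ → RatFunc ℚ := fun k =>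
      (1 - q ^ k) / (1 + q ^ (n+1)) *
        (2 * (-q ^ (n + 1)) ^ k / (1 + q ^ k) * (H k / H n)) with hg
    rw [Finset.sum_range_succ]
    have hsum : ∑ k ∈ Finset.range (n + 1),
        2 * (-q ^ (n + 1 + 1)) ^ k / (1 + q ^ k) * (H k / H (n + 1))
        = (∑ k ∈ Finset.range (n + 1), 2 * (-q ^ (n + 1)) ^ k / (1 + q ^ k) * (H k / H n))
          + (g (n+1) - g 0) := by
      rw [← Finset.sum_range_sub g (n+1), ← Finset.sum_add_distrib]
      exact Finset.sum_congr rfl fun k _ => step n k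
    have hg0 : g 0 = 0 := by simp [hg]
    have hset : Finset.Icc (-((n + 1 : ℕ) : ℤ)) ((n + 1 : ℕ) : ℤ)
        = insert (-((n + 1 : ℕ) : ℤ)) (insert ((n + 1 : ℕ) : ℤ) (Finset.Icc (-(n : ℤ)) (n : ℤ))) := by
      ext z
      simp only [Finset.mem_Icc, Finset.mem_insert]
      push_cast
      omega
    have hm1 : ((n + 1 : ℕ) : ℤ) ∉ Finset.Icc (-(n : ℤ)) (n : ℤ) := by
      simp only [Finset.mem_Icc]
      push_cast
      omega
    have hm2 : -((n + 1 : ℕ) : ℤ) ∉ insert ((n + 1 : ℕ) : ℤ) (Finset.Icc (-(n : ℤ)) (n : ℤ)) := by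
      simp only [Finset.mem_insert, Finset.mem_Icc]
      push_cast
      omega
    rw [hset, Finset.sum_insert hm2, Finset.sum_insert hm1]
    have hexp1 : ((-((n + 1 : ℕ) : ℤ)) ^ 2) = (((n+1)^2 : ℕ) : ℤ) := by push_cast; ring
    have hexp2 : ((((n + 1 : ℕ) : ℤ)) ^ 2) = (((n+1)^2 : ℕ) : ℤ) := by push_cast; ring
    rw [hexp1, hexp2, zpow_natCast]
    rw [hsum, hg0, ← ih]
    linear_combination tail n
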